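/- Let b > 0, γ > 0 and define F(s,t) = ¼(s⁴ + 2b s²t² + t⁴) and F_♯(s,t) = F(s,t) if s⁴+2bs²t²+t⁴ ≤ γ², and F_♯(s,t) = (γ/2)·√(s⁴+2bs²t²+t⁴) − γ²/4 otherwise. Then F_♯ is continuously differentiable on ℝ² and F_♯(s,t) ≤ F(s,t) for all (s,t) ∈ ℝ². -/

import Mathlib

/-- The quartic form `Q(s,t) = s⁴ + 2bs²t² + t⁴`. -/
def Qform (b : ℝ) (p : ℝ × ℝ) : ℝ :=
  p.1 ^ 4 + 2 * b * p.1 ^ 2 * p.2 ^ 2 + p.2 ^ 4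

/-- `F(s,t) = ¼(s⁴ + 2bs²t² + t⁴)`. -/
noncomputable def Ffun (b : ℝ) (p : ℝ × ℝ) : ℝ := (1 / 4) * Qform b p

/-- The penalized nonlinearity `F♯`. -/
noncomputable def Fsharp (b γ : ℝ) (p : ℝ × ℝ) : ℝ :=
  if Qform b p ≤ γ ^ 2 then (1 / 4) * Qform b p
  else (γ / 2) * Real.sqrt (Qform b p) - γ ^ 2 / 4

noncomputable def phiCut (γ : ℝ) (x : ℝ) : ℝ :=
  if x ≤ γ ^ 2 then (1 / 4) * x else (γ / 2) * Real.sqrt x - γ ^ 2 / 4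

noncomputable def Dcut (γ : ℝ) (x : ℝ) : ℝ :=
  min (1 / 4) (γ / (4 * Real.sqrt (max x (γ ^ 2))))

lemma Dcut_cont {γ : ℝ} (hγ : 0 < γ) : Continuous (Dcut γ) := by
  apply continuous_const.min
  apply continuous_const.div
  · fun_prop
  · intro x
    have h1 : (0:ℝ) < γ ^ 2 := by positivity
    have : 0 < Real.sqrt (max x (γ ^ 2)) :=
      Real.sqrt_pos.mpr (lt_of_lt_of_le h1 (le_max_right _ _))
    positivity

lemma Dcut_left {γ : ℝ} (hγ : 0 < γ) {x : ℝ} (hx : x ≤ γ ^ 2) : Dcut γ x = 1 / 4 := by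
  have : max x (γ ^ 2) = γ ^ 2 := max_eq_right hx
  rw [Dcut, this, Real.sqrt_sq hγ.le]
  rw [show γ / (4 * γ) = 1 / 4 by rw [div_eq_div_iff (by positivity : _ ≠ (0:ℝ)) (by norm_num : (4:ℝ) ≠ 0)]; ring]
  exact min_self _

lemma Dcut_right {γ : ℝ} (hγ : 0 < γ) {x : ℝ} (hx : γ ^ 2 ≤ x) :
    Dcut γ x = γ / (4 * Real.sqrt x) := by
  have hm : max x (γ ^ 2) = x := max_eq_left hx
  have hs : γ ≤ Real.sqrt x := by
    have := Real.sqrt_le_sqrt hx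
    rwa [Real.sqrt_sq hγ.le] at this
  have hspos : 0 < Real.sqrt x := lt_of_lt_of_le hγ hs
  rw [Dcut, hm, min_eq_right]
  rw [div_le_div_iff₀ (by positivity) (by norm_num)]
  nlinarith

lemma phiCut_hasDeriv {γ : ℝ} (hγ : 0 < γ) (x : ℝ) :
    HasDerivAt (phiCut γ) (Dcut γ x) x := by
  rcases lt_trichotomy x (γ ^ 2) with h | h | h
  · have hd : HasDerivAt (fun y : ℝ => (1 / 4) * y) (1 / 4) x := by
      simpa using (hasDerivAt_id x).const_mul (1/4 : ℝ)
    rw [Dcut_left hγ h.le]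
    apply hd.congr_of_eventuallyEq
    filter_upwards [Iio_mem_nhds h] with y hy
    have : y ≤ γ ^ 2 := (Set.mem_Iio.mp hy).le
    simp [phiCut, this]
  · -- boundary x = γ ^ 2
    have hx0 : (0:ℝ) < x := by rw [h]; positivity
    have hsx : Real.sqrt x = γ := by rw [h]; exact Real.sqrt_sq hγ.le
    have hD : Dcut γ x = 1 / 4 := Dcut_left hγ h.le
    rw [hD]
    rw [← hasDerivWithinAt_univ, ← Set.Iic_union_Ici (a := x)]
    apply HasDerivWithinAt.union
    · have hd : HasDerivWithinAt (fun y : ℝ => (1 / 4) * y) (1 / 4) (Set.Iic x) x := by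
        simpa using ((hasDerivAt_id x).const_mul (1/4 : ℝ)).hasDerivWithinAt
      apply hd.congr
      · intro y hy
        have : y ≤ γ ^ 2 := h ▸ hy.out
        simp [phiCut, this]
      · have : x ≤ γ ^ 2 := h.le
        simp [phiCut, this]
    · have hd : HasDerivAt (fun y : ℝ => (γ / 2) * Real.sqrt y - γ ^ 2 / 4)
          ((γ / 2) * (1 / (2 * Real.sqrt x))) x := by
        exact ((Real.hasDerivAt_sqrt (ne_of_gt hx0)).const_mul (γ/2)).sub_const _
      have heq : (γ / 2) * (1 / (2 * Real.sqrt x)) = 1 / 4 := by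
        rw [hsx]; rw [mul_one_div, div_div, div_eq_div_iff (by positivity) (by norm_num : (4:ℝ) ≠ 0)]; ring
      rw [← heq]
      apply hd.hasDerivWithinAt.congr
      · intro y hy
        rcases eq_or_lt_of_le hy.out with h2 | h2
        · have hy2 : y ≤ γ ^ 2 := le_of_eq (h2.symm.trans h)
          have hys : Real.sqrt y = γ := by rw [← h2]; exact hsx
          simp only [phiCut, ← h2, h]
          rw [if_pos le_rfl, Real.sqrt_sq hγ.le]
          ring
        · have : ¬ y ≤ γ ^ 2 := not_le.mpr (h ▸ h2)
          simp [phiCut, this]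
      · have hx2 : x ≤ γ ^ 2 := h.le
        simp only [phiCut, h]
        rw [if_pos le_rfl, Real.sqrt_sq hγ.le]
        ring
  · have hx0 : (0:ℝ) < x := lt_trans (by positivity) h
    have hd : HasDerivAt (fun y : ℝ => (γ / 2) * Real.sqrt y - γ ^ 2 / 4)
        ((γ / 2) * (1 / (2 * Real.sqrt x))) x :=
      ((Real.hasDerivAt_sqrt (ne_of_gt hx0)).const_mul (γ/2)).sub_const _
    have heq : (γ / 2) * (1 / (2 * Real.sqrt x)) = Dcut γ x := by
      rw [Dcut_right hγ h.le]
      have : (0:ℝ) < Real.sqrt x := Real.sqrt_pos.mpr hx0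
      rw [mul_one_div, div_div, div_eq_div_iff (by positivity : _ ≠ (0:ℝ)) (by positivity : _ ≠ (0:ℝ))]; ring
    rw [← heq]
    apply hd.congr_of_eventuallyEq
    filter_upwards [Ioi_mem_nhds h] with y hy
    simp [phiCut, not_le.mpr (Set.mem_Ioi.mp hy)]

lemma phiCut_contDiff {γ : ℝ} (hγ : 0 < γ) : ContDiff ℝ 1 (phiCut γ) := by
  rw [contDiff_one_iff_deriv]
  constructor
  · exact fun x => (phiCut_hasDeriv hγ x).differentiableAt
  · have : deriv (phiCut γ) = Dcut γ := funext fun x => (phiCut_hasDeriv hγ x).deriv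
    rw [this]; exact Dcut_cont hγ

/-- For `b, γ > 0`, the function `F♯` is continuously differentiable on `ℝ²`
and `F♯(s,t) ≤ F(s,t)` for all `(s,t) ∈ ℝ²`. -/
theorem stmt_1 (b γ : ℝ) (hb : 0 < b) (hγ : 0 < γ) :
    ContDiff ℝ 1 (Fsharp b γ) ∧ ∀ p : ℝ × ℝ, Fsharp b γ p ≤ Ffun b p := by
  have hQnn : ∀ p : ℝ × ℝ, 0 ≤ Qform b p := by
    intro p
    have := mul_nonneg (mul_nonneg (by linarith : (0:ℝ) ≤ 2 * b) (sq_nonneg p.1)) (sq_nonneg p.2)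
    unfold Qform
    nlinarith [sq_nonneg (p.1 ^ 2), sq_nonneg (p.2 ^ 2)]
  constructor
  · have hQ : ContDiff ℝ 1 (Qform b) := by unfold Qform; fun_prop
    have : Fsharp b γ = (phiCut γ) ∘ (Qform b) := rfl
    rw [this]
    exact (phiCut_contDiff hγ).comp hQ
  · intro p
    rw [Fsharp, Ffun]
    split_ifs with h
    · exact le_rfl
    · have hQ0 := hQnn p
      have hu : Real.sqrt (Qform b p) ^ 2 = Qform b p := Real.sq_sqrt hQ0
      nlinarith [sq_nonneg (Real.sqrt (Qform b p) - γ)]
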